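/- Let H : Matrix (Fin d) (Fin d) ℂ be Hermitian, ε ∈ ℝ, and ρ : Matrix (Fin d) (Fin d) ℂ. Then for every k ∈ {0, …, N−1}, the partial trace of G onto slice k — the d × d matrix whose (i, j) entry is the sum over all assignments h of values in Fin d to the slices other than k of G evaluated at the pair of index functions extending h by i (respectively j) at slice k — equals Matrix.exp(−(i·ε·k) • H) * ρ * Matrix.exp((i·ε·k) • H), the Schrödinger-evolved state at time εk. In particular for k = 0 it equals ρ, and the full trace satisfies Tr G = tr ρ. (Thus tracing the generalized spacetime state over all time slices except one recovers the ordinary quantum state at that time, unitarily evolved by H.) -/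

import Mathlib

open Matrix Complex NormedSpace

/-- The slice-wise Kronecker product `⊗_t A t`. -/
noncomputable def sliceProd (N d : ℕ) [NeZero N]
    (A : ZMod N → Matrix (Fin d) (Fin d) ℂ) :
    Matrix (ZMod N → Fin d) (ZMod N → Fin d) ℂ :=
  Matrix.of fun f g => ∏ t : ZMod N, A t (f t) (g t)

/-- The cyclic time-translation operator `𝒮`. -/
noncomputable def timeShift (N d : ℕ) [NeZero N] :
    Matrix (ZMod N → Fin d) (ZMod N → Fin d) ℂ :=
  Matrix.of fun f g => if ∀ t : ZMod N, f t = g (t - 1) then 1 else 0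

/-- The slice-local operator `B_t`. -/
noncomputable def sliceLocal (N d : ℕ) [NeZero N]
    (B : Matrix (Fin d) (Fin d) ℂ) (t : ZMod N) :
    Matrix (ZMod N → Fin d) (ZMod N → Fin d) ℂ :=
  sliceProd N d (fun t' => if t' = t then B else 1)

/-- `𝒱 := ⊗_t e^{iεtH}`. -/
noncomputable def Vop (N d : ℕ) [NeZero N] (H : Matrix (Fin d) (Fin d) ℂ) (ε : ℝ) :
    Matrix (ZMod N → Fin d) (ZMod N → Fin d) ℂ :=
  sliceProd N d (fun t => NormedSpace.exp ((Complex.I * (ε : ℂ) * (t.val : ℂ)) • H))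

/-- `G := ρ₀ e^{iS̃}` with `e^{iS̃} = 𝒱ᴴ 𝒮 𝒱`. -/
noncomputable def Gst (N d : ℕ) [NeZero N] (H : Matrix (Fin d) (Fin d) ℂ) (ε : ℝ)
    (ρ : Matrix (Fin d) (Fin d) ℂ) :
    Matrix (ZMod N → Fin d) (ZMod N → Fin d) ℂ :=
  sliceLocal N d ρ 0 * ((Vop N d H ε)ᴴ * timeShift N d * Vop N d H ε)

/-- The partial trace of a spacetime operator onto the slice `k`: the `d × d`
matrix whose `(i, j)` entry sums over all assignments of values to the slices
other than `k`, extended by `i` (resp. `j`) at slice `k`. -/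
noncomputable def sliceTrace (N d : ℕ) [NeZero N]
    (G : Matrix (ZMod N → Fin d) (ZMod N → Fin d) ℂ) (k : ZMod N) :
    Matrix (Fin d) (Fin d) ℂ :=
  Matrix.of fun i j =>
    ∑ h : {t : ZMod N // t ≠ k} → Fin d,
      G (fun t => if ht : t = k then i else h ⟨t, ht⟩)
        (fun t => if ht : t = k then j else h ⟨t, ht⟩)

/-! ### Auxiliary lemmas -/

lemma sliceProd_mul (N d : ℕ) [NeZero N] (A B : ZMod N → Matrix (Fin d) (Fin d) ℂ) :
    sliceProd N d A * sliceProd N d B = sliceProd N d (fun t => A t * B t) := by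
  ext f g
  simp only [sliceProd, Matrix.mul_apply, Matrix.of_apply, ← Finset.prod_mul_distrib]
  rw [← Fintype.prod_sum (fun t x => A t (f t) x * B t x (g t))]

lemma sliceProd_conjTranspose (N d : ℕ) [NeZero N]
    (A : ZMod N → Matrix (Fin d) (Fin d) ℂ) :
    (sliceProd N d A)ᴴ = sliceProd N d (fun t => (A t)ᴴ) := by
  ext f g
  simp [sliceProd, Matrix.conjTranspose_apply, star_prod]

lemma timeShift_mul_sliceProd (N d : ℕ) [NeZero N]
    (A : ZMod N → Matrix (Fin d) (Fin d) ℂ) :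
    timeShift N d * sliceProd N d A
      = Matrix.of fun f g => ∏ t : ZMod N, A t (f (t + 1)) (g t) := by
  ext f g
  simp only [timeShift, sliceProd, Matrix.mul_apply, Matrix.of_apply]
  rw [Finset.sum_eq_single (fun s : ZMod N => f (s + 1))]
  · rw [if_pos, one_mul]
    intro t; show f t = f (t - 1 + 1); rw [sub_add_cancel]
  · intro b _ hb
    rw [if_neg, zero_mul]
    intro hc
    exact hb (funext fun s => by rw [hc (s + 1), add_sub_cancel_right])
  · intro hmem; exact absurd (Finset.mem_univ _) hmem

/-- The single-slice transfer matrix occurring in `Gst`. -/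
noncomputable def Cmat (N d : ℕ) [NeZero N] (H : Matrix (Fin d) (Fin d) ℂ) (ε : ℝ)
    (ρ : Matrix (Fin d) (Fin d) ℂ) (t : ZMod N) : Matrix (Fin d) (Fin d) ℂ :=
  (if t = 0 then ρ else 1) * NormedSpace.exp ((-(Complex.I * (ε : ℂ) * (t.val : ℂ))) • H)
    * NormedSpace.exp ((Complex.I * (ε : ℂ) * (((t - 1).val : ℕ) : ℂ)) • H)

lemma Gst_apply (N d : ℕ) [NeZero N] (H : Matrix (Fin d) (Fin d) ℂ)
    (hH : H.IsHermitian) (ε : ℝ) (ρ : Matrix (Fin d) (Fin d) ℂ)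
    (f g : ZMod N → Fin d) :
    Gst N d H ε ρ f g = ∏ t : ZMod N, Cmat N d H ε ρ t (f t) (g (t - 1)) := by
  have hV : (Vop N d H ε)ᴴ
      = sliceProd N d (fun t => NormedSpace.exp ((-(Complex.I * (ε : ℂ) * (t.val : ℂ))) • H)) := by
    rw [Vop, sliceProd_conjTranspose]
    refine congrArg (sliceProd N d) (funext fun t => ?_)
    rw [← Matrix.exp_conjTranspose, Matrix.conjTranspose_smul, hH.eq]
    congr 1
    simp only [star_mul', Complex.star_def, Complex.conj_I, Complex.conj_ofReal,
      Complex.conj_natCast]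
    ring
  have h1 : Gst N d H ε ρ
      = sliceProd N d (fun t => (if t = 0 then ρ else 1)
          * NormedSpace.exp ((-(Complex.I * (ε : ℂ) * (t.val : ℂ))) • H))
        * (timeShift N d * Vop N d H ε) := by
    simp only [Gst, sliceLocal, hV]
    rw [mul_assoc _ (timeShift N d) (Vop N d H ε), ← mul_assoc, sliceProd_mul]
  rw [h1]
  simp only [Vop]
  rw [timeShift_mul_sliceProd, Matrix.mul_apply]
  simp only [sliceProd, Matrix.of_apply]
  have hre : ∀ h : ZMod N → Fin d,
      (∏ t : ZMod N, NormedSpace.exp ((Complex.I * (ε : ℂ) * (t.val : ℂ)) • H) (h (t + 1)) (g t))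
        = ∏ t : ZMod N,
            NormedSpace.exp ((Complex.I * (ε : ℂ) * ((((t : ZMod N) - 1).val : ℕ) : ℂ)) • H)
              (h t) (g (t - 1)) := by
    intro h
    rw [← Equiv.prod_comp (Equiv.subRight (1 : ZMod N))
      (fun t => NormedSpace.exp ((Complex.I * (ε : ℂ) * (t.val : ℂ)) • H) (h (t + 1)) (g t))]
    refine Finset.prod_congr rfl fun t _ => ?_
    simp [Equiv.subRight_apply, sub_add_cancel]
  simp only [hre]
  simp only [← Finset.prod_mul_distrib]
  rw [← Fintype.prod_sum (fun t x =>
    ((if t = 0 then ρ else 1) * NormedSpace.exp ((-(Complex.I * (ε : ℂ) * (t.val : ℂ))) • H)) (f t) x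
      * NormedSpace.exp ((Complex.I * (ε : ℂ) * ((((t : ZMod N) - 1).val : ℕ) : ℂ)) • H) x (g (t - 1)))]
  refine Finset.prod_congr rfl fun t _ => Eq.symm ?_
  simp only [Cmat]
  rw [Matrix.mul_apply]

/-- Path-sum lemma: contracting a chain of matrices. -/
lemma path_sum {d : ℕ} : ∀ (n : ℕ) (D : Fin (n + 1) → Matrix (Fin d) (Fin d) ℂ)
    (i j : Fin d),
    (∑ x : Fin n → Fin d, ∏ m : Fin (n + 1),
        D m (Fin.cons (α := fun _ => Fin d) i x m)
          (Fin.snoc (α := fun _ => Fin d) x j m))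
      = (List.ofFn D).prod i j := by
  intro n
  induction n with
  | zero =>
    intro D i j
    rw [List.ofFn_succ, List.ofFn_zero, List.prod_cons, List.prod_nil, mul_one]
    rw [Fintype.sum_unique]
    rw [Fin.prod_univ_one]
    simp [Fin.snoc, Fin.cons_zero]
  | succ n ih =>
    intro D i j
    rw [List.ofFn_succ, List.prod_cons, Matrix.mul_apply]
    rw [← (Fin.consEquiv (fun _ : Fin (n + 1) => Fin d)).sum_comp
      (fun x : Fin (n + 1) → Fin d =>
        ∏ m : Fin (n + 2), D m (Fin.cons (α := fun _ => Fin d) i x m)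
          (Fin.snoc (α := fun _ => Fin d) x j m))]
    rw [Fintype.sum_prod_type]
    refine Finset.sum_congr rfl fun a _ => ?_
    rw [← ih (fun m => D m.succ) a j, Finset.mul_sum]
    refine Finset.sum_congr rfl fun x _ => ?_
    have hc : (Fin.consEquiv (fun _ : Fin (n + 1) => Fin d)) (a, x) = Fin.cons a x := rfl
    rw [hc, Fin.prod_univ_succ, ← Fin.cons_snoc_eq_snoc_cons]
    simp [Fin.cons_zero, Fin.cons_succ]

lemma cast_inj_zmod {n : ℕ} {a b : ℕ} (ha : a < n + 1) (hb : b < n + 1)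
    (h : ((a : ℕ) : ZMod (n + 1)) = (b : ℕ)) : a = b := by
  have := congrArg ZMod.val h
  rwa [ZMod.val_natCast, ZMod.val_natCast, Nat.mod_eq_of_lt ha, Nat.mod_eq_of_lt hb] at this

/-- Contracting the cyclic chain onto slice `k` gives an ordered product. -/
lemma sum_chain {d : ℕ} (n : ℕ) (C : ZMod (n + 1) → Matrix (Fin d) (Fin d) ℂ)
    (k : ZMod (n + 1)) (i j : Fin d) :
    (∑ h : {t : ZMod (n + 1) // t ≠ k} → Fin d,
      ∏ t : ZMod (n + 1),
        C t (if ht : t = k then i else h ⟨t, ht⟩)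
          (if ht : t - 1 = k then j else h ⟨t - 1, ht⟩))
      = (List.ofFn (fun m : Fin (n + 1) =>
          C (k - ((m : ℕ) : ZMod (n + 1))))).prod i j := by
  have hne : ∀ r : Fin n, k - ((((r : ℕ) + 1 : ℕ)) : ZMod (n + 1)) ≠ k := by
    intro r h
    rw [sub_eq_self] at h
    have h0 : ((((r : ℕ) + 1 : ℕ)) : ZMod (n + 1)) = ((0 : ℕ) : ZMod (n + 1)) := by
      simpa using h
    have := cast_inj_zmod (by omega) (by omega) h0
    omega
  set ψ : Fin n → {t : ZMod (n + 1) // t ≠ k} :=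
    fun r => ⟨k - ((((r : ℕ) + 1 : ℕ)) : ZMod (n + 1)), hne r⟩ with hψ
  have ψinj : Function.Injective ψ := by
    intro r s hrs
    have h1 : k - ((((r : ℕ) + 1 : ℕ)) : ZMod (n + 1))
        = k - ((((s : ℕ) + 1 : ℕ)) : ZMod (n + 1)) := congrArg Subtype.val hrs
    have h2 := sub_right_inj.mp h1
    have := cast_inj_zmod (a := (r : ℕ) + 1) (b := (s : ℕ) + 1)
      (by omega) (by omega) h2
    exact Fin.ext (by omega)
  have ψbij : Function.Bijective ψ := by
    refine (Fintype.bijective_iff_injective_and_card ψ).2 ⟨ψinj, ?_⟩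
    rw [Fintype.card_fin, Fintype.card_subtype_compl (· = k), ZMod.card,
      Fintype.card_subtype_eq]
    omega
  have τinj : Function.Injective
      (fun m : Fin (n + 1) => k - ((m : ℕ) : ZMod (n + 1))) := by
    intro r s h
    have h2 := sub_right_inj.mp h
    exact Fin.ext (cast_inj_zmod r.isLt s.isLt h2)
  have τbij : Function.Bijective
      (fun m : Fin (n + 1) => k - ((m : ℕ) : ZMod (n + 1))) := by
    exact (Fintype.bijective_iff_injective_and_card _).2
      ⟨τinj, by rw [Fintype.card_fin, ZMod.card]⟩
  set ψe : Fin n ≃ {t : ZMod (n + 1) // t ≠ k} := Equiv.ofBijective ψ ψbij with hψe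
  set τ : Fin (n + 1) ≃ ZMod (n + 1) := Equiv.ofBijective _ τbij with hτ
  rw [← path_sum n (fun m => C (k - ((m : ℕ) : ZMod (n + 1)))) i j]
  refine Fintype.sum_equiv (Equiv.arrowCongr ψe.symm (Equiv.refl (Fin d))) _ _ ?_
  intro h
  refine (Fintype.prod_equiv τ _ _ fun m => ?_).symm
  have hτm : τ m = k - ((m : ℕ) : ZMod (n + 1)) := rfl
  have hx : (Equiv.arrowCongr ψe.symm (Equiv.refl (Fin d))) h = fun r => h (ψe r) := by
    funext r; simp [Equiv.arrowCongr]
  rw [hτm, hx]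
  refine congrArg₂ (C (k - ((m : ℕ) : ZMod (n + 1)))) ?_ ?_
  · -- row index
    refine Fin.cases ?_ (fun r => ?_) m
    · have h0 : k - (((0 : Fin (n + 1)) : ℕ) : ZMod (n + 1)) = k := by
        simp
      rw [h0, dif_pos rfl, Fin.cons_zero]
    · have hne' : k - (((r.succ : Fin (n + 1)) : ℕ) : ZMod (n + 1)) ≠ k := hne r
      rw [dif_neg hne', Fin.cons_succ]
      rfl
  · -- column index
    refine Fin.lastCases ?_ (fun r => ?_) m
    · have hlast : k - (((Fin.last n : Fin (n + 1)) : ℕ) : ZMod (n + 1)) - 1 = k := by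
        have h2 : (((Fin.last n : Fin (n + 1)) : ℕ) : ZMod (n + 1)) + 1
            = (((n + 1 : ℕ)) : ZMod (n + 1)) := by
          push_cast [Fin.val_last]; ring
        rw [sub_sub, h2, ZMod.natCast_self, sub_zero]
      rw [hlast, dif_pos rfl, Fin.snoc_last]
    · have heq : k - (((r.castSucc : Fin (n + 1)) : ℕ) : ZMod (n + 1)) - 1
          = k - ((((r : ℕ) + 1 : ℕ)) : ZMod (n + 1)) := by
        rw [sub_sub]
        congr 1
        push_cast [Fin.coe_castSucc]
        ring
      rw [heq, dif_neg (hne r), Fin.snoc_castSucc]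
      rfl

lemma Cmat_zero (n d : ℕ) (H : Matrix (Fin d) (Fin d) ℂ) (ε : ℝ)
    (ρ : Matrix (Fin d) (Fin d) ℂ) :
    Cmat (n + 1) d H ε ρ 0 = ρ * NormedSpace.exp ((Complex.I * (ε : ℂ) * (n : ℂ)) • H) := by
  have h0 : (((0 : ZMod (n + 1)).val : ℕ) : ℂ) = 0 := by simp [ZMod.val_zero]
  have h1 : ((0 : ZMod (n + 1)) - 1) = (-1 : ZMod (n + 1)) := by rw [zero_sub]
  simp only [Cmat, if_pos rfl]
  rw [h0, mul_zero, neg_zero, zero_smul, NormedSpace.exp_zero, mul_one, h1,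
    ZMod.val_neg_one]
  simp

lemma Cmat_ne_zero (n d : ℕ) (H : Matrix (Fin d) (Fin d) ℂ) (ε : ℝ)
    (ρ : Matrix (Fin d) (Fin d) ℂ) (t : ZMod (n + 1)) (ht : t ≠ 0) :
    Cmat (n + 1) d H ε ρ t = NormedSpace.exp ((-(Complex.I * (ε : ℂ))) • H) := by
  simp only [Cmat, if_neg ht, one_mul]
  have h1 : 1 ≤ t.val := Nat.pos_of_ne_zero (fun h => ht ((ZMod.val_eq_zero t).mp h))
  have hlt : t.val < n + 1 := ZMod.val_lt t
  have hval : (t - 1).val = t.val - 1 := by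
    have ht' : ((t.val : ℕ) : ZMod (n + 1)) = t := ZMod.natCast_rightInverse t
    have : t - 1 = (((t.val - 1 : ℕ)) : ZMod (n + 1)) := by
      rw [Nat.cast_sub h1, Nat.cast_one, ht']
    rw [this, ZMod.val_natCast, Nat.mod_eq_of_lt (by omega)]
  rw [hval, ← Matrix.exp_add_of_commute _ _
    (((Commute.refl H).smul_left _).smul_right _)]
  congr 1
  rw [← add_smul]
  congr 1
  have : ((t.val - 1 : ℕ) : ℂ) = ((t.val : ℕ) : ℂ) - 1 := by
    rw [Nat.cast_sub h1, Nat.cast_one]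
  rw [this]; ring

lemma listProd_if {d : ℕ} (P E : Matrix (Fin d) (Fin d) ℂ) :
    ∀ n k : ℕ, k ≤ n →
      (List.ofFn fun m : Fin (n + 1) => if (m : ℕ) = k then P else E).prod
        = E ^ k * (P * E ^ (n - k)) := by
  intro n
  induction n with
  | zero =>
    intro k hk
    interval_cases k
    simp [List.ofFn_succ]
  | succ n ih =>
    intro k hk
    cases k with
    | zero =>
      rw [List.ofFn_succ, List.prod_cons]
      have h0 : (((0 : Fin (n + 2)) : ℕ) = 0) := rfl
      rw [if_pos h0]
      have htail : (fun r : Fin (n + 1) =>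
          if ((r.succ : Fin (n + 2)) : ℕ) = 0 then P else E) = fun _ => E := by
        funext r
        rw [if_neg]
        simp [Fin.val_succ]
      rw [htail]
      simp [List.prod_replicate, pow_zero, List.ofFn_const]
      rw [← pow_succ']
    | succ k =>
      rw [List.ofFn_succ, List.prod_cons]
      have h0 : ¬(((0 : Fin (n + 2)) : ℕ) = k + 1) := by simp
      rw [if_neg h0]
      have htail : (fun r : Fin (n + 1) =>
          if ((r.succ : Fin (n + 2)) : ℕ) = k + 1 then P else E)
          = fun r : Fin (n + 1) => if (r : ℕ) = k then P else E := by
        funext r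
        simp [Fin.val_succ]
      rw [htail, ih k (by omega)]
      have hnk : n + 1 - (k + 1) = n - k := by omega
      rw [hnk, ← mul_assoc, ← pow_succ']

/-- The main computation: the partial trace of `G` onto slice `k`. -/
lemma sliceTrace_Gst (N d : ℕ) [NeZero N] (H : Matrix (Fin d) (Fin d) ℂ)
    (hH : H.IsHermitian) (ε : ℝ) (ρ : Matrix (Fin d) (Fin d) ℂ)
    (k : ℕ) (hk : k ≤ N - 1) :
    sliceTrace N d (Gst N d H ε ρ) (k : ZMod N) =
      NormedSpace.exp ((-(Complex.I * (ε : ℂ) * (k : ℂ))) • H) * ρ *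
        NormedSpace.exp ((Complex.I * (ε : ℂ) * (k : ℂ)) • H) := by
  obtain ⟨n, rfl⟩ := Nat.exists_eq_succ_of_ne_zero (NeZero.ne N)
  have hkn : k ≤ n := by omega
  ext i j
  rw [sliceTrace, Matrix.of_apply]
  have hG : ∀ h : {t : ZMod (n + 1) // t ≠ (k : ZMod (n + 1))} → Fin d,
      Gst (n + 1) d H ε ρ
        (fun t => if ht : t = (k : ZMod (n + 1)) then i else h ⟨t, ht⟩)
        (fun t => if ht : t = (k : ZMod (n + 1)) then j else h ⟨t, ht⟩)
        = ∏ t : ZMod (n + 1),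
            Cmat (n + 1) d H ε ρ t
              (if ht : t = (k : ZMod (n + 1)) then i else h ⟨t, ht⟩)
              (if ht : t - 1 = (k : ZMod (n + 1)) then j else h ⟨t - 1, ht⟩) :=
    fun h => Gst_apply (n + 1) d H hH ε ρ _ _
  simp only [hG]
  rw [sum_chain n (Cmat (n + 1) d H ε ρ) (k : ZMod (n + 1)) i j]
  have hfun : (fun m : Fin (n + 1) =>
      Cmat (n + 1) d H ε ρ ((k : ZMod (n + 1)) - ((m : ℕ) : ZMod (n + 1))))
      = fun m : Fin (n + 1) =>
          if (m : ℕ) = k then ρ * NormedSpace.exp ((Complex.I * (ε : ℂ) * (n : ℂ)) • H)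
          else NormedSpace.exp ((-(Complex.I * (ε : ℂ))) • H) := by
    funext m
    by_cases hm : (m : ℕ) = k
    · rw [if_pos hm, ← hm, sub_self, Cmat_zero]
    · rw [if_neg hm]
      apply Cmat_ne_zero
      intro h0
      rw [sub_eq_zero] at h0
      exact hm (cast_inj_zmod (by omega) m.isLt h0).symm
  rw [hfun, listProd_if _ _ n k hkn]
  have comm : ∀ (a b : ℂ), Commute (a • H) (b • H) :=
    fun a b => ((Commute.refl H).smul_left _).smul_right _
  have e1 : NormedSpace.exp ((-(Complex.I * (ε : ℂ))) • H) ^ k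
      = NormedSpace.exp ((-(Complex.I * (ε : ℂ) * (k : ℂ))) • H) := by
    rw [← Matrix.exp_nsmul]
    congr 1
    rw [← Nat.cast_smul_eq_nsmul ℂ, smul_smul]
    congr 1
    ring
  have e2 : NormedSpace.exp ((Complex.I * (ε : ℂ) * (n : ℂ)) • H)
        * NormedSpace.exp ((-(Complex.I * (ε : ℂ))) • H) ^ (n - k)
      = NormedSpace.exp ((Complex.I * (ε : ℂ) * (k : ℂ)) • H) := by
    have hs : ((n - k : ℕ) • ((-(Complex.I * (ε : ℂ))) • H) : Matrix (Fin d) (Fin d) ℂ)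
        = (((n : ℂ) - (k : ℂ)) * -(Complex.I * (ε : ℂ))) • H := by
      rw [← Nat.cast_smul_eq_nsmul ℂ, smul_smul, Nat.cast_sub hkn]
    rw [← Matrix.exp_nsmul, hs, ← Matrix.exp_add_of_commute _ _ (comm _ _)]
    congr 1
    rw [← add_smul]
    congr 1
    ring
  rw [e1, mul_assoc ρ _ _, e2, ← mul_assoc]

lemma trace_eq_trace_sliceTrace (N d : ℕ) [NeZero N]
    (G : Matrix (ZMod N → Fin d) (ZMod N → Fin d) ℂ) :
    Matrix.trace G = Matrix.trace (sliceTrace N d G 0) := by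
  classical
  let e : (Fin d × ({t : ZMod N // t ≠ 0} → Fin d)) ≃ (ZMod N → Fin d) :=
    { toFun := fun p => fun t => if ht : t = 0 then p.1 else p.2 ⟨t, ht⟩
      invFun := fun f => (f 0, fun p => f p.1)
      left_inv := fun p => by
        obtain ⟨a, b⟩ := p
        refine Prod.ext ?_ ?_
        · simp
        · funext q
          exact dif_neg q.2
      right_inv := fun f => by
        funext t
        by_cases ht : t = 0
        · subst ht; simp
        · simp [ht] }
  simp only [Matrix.trace, Matrix.diag]
  rw [← e.sum_comp (fun f => G f f), Fintype.sum_prod_type]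
  rw [sliceTrace]
  rfl

theorem sliceTrace_spacetime_state (N d : ℕ) [NeZero N] (hd : 1 ≤ d)
    (H : Matrix (Fin d) (Fin d) ℂ) (hH : H.IsHermitian) (ε : ℝ)
    (ρ : Matrix (Fin d) (Fin d) ℂ) (k : ℕ) (hk : k ≤ N - 1) :
    sliceTrace N d (Gst N d H ε ρ) (k : ZMod N) =
        NormedSpace.exp ((-(Complex.I * (ε : ℂ) * (k : ℂ))) • H) * ρ *
          NormedSpace.exp ((Complex.I * (ε : ℂ) * (k : ℂ)) • H) ∧
      Matrix.trace (Gst N d H ε ρ) = Matrix.trace ρ := by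
  refine ⟨sliceTrace_Gst N d H hH ε ρ k hk, ?_⟩
  rw [trace_eq_trace_sliceTrace]
  have h0 : ((0 : ℕ) : ZMod N) = 0 := Nat.cast_zero
  have := sliceTrace_Gst N d H hH ε ρ 0 (Nat.zero_le _)
  rw [h0] at this
  rw [this]
  simp
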